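/- For a real parameter a, define g₁(x,y) = x·[5(x³+ax²−a⁴x−a⁵−(2/5)a⁴)+2y²] and g₂(x,y) = y·[5(y³+ay²−a⁴y−a⁵−(2/5)a⁴)+2x²]. There exist an open neighborhood U of the origin in ℝ² and ε > 0 such that for every a with 0 < a < ε: the set of common zeroes of g₁ and g₂ in U has exactly 11 elements, and at each of these common zeroes the Jacobian determinant ∂(g₁,g₂)/∂(x,y) is nonzero (i.e. dg₁ ∧ dg₂ ≠ 0 there). -/

import Mathlib

set_option maxHeartbeats 1000000


/-- `g₁(x,y) = x·[5(x³+ax²−a⁴x−a⁵−(2/5)a⁴)+2y²]`. -/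
noncomputable def gOne (a : ℝ) (p : ℝ × ℝ) : ℝ :=
  p.1 * (5 * (p.1 ^ 3 + a * p.1 ^ 2 - a ^ 4 * p.1 - a ^ 5 - (2 / 5) * a ^ 4) + 2 * p.2 ^ 2)

/-- `g₂(x,y) = y·[5(y³+ay²−a⁴y−a⁵−(2/5)a⁴)+2x²]`. -/
noncomputable def gTwo (a : ℝ) (p : ℝ × ℝ) : ℝ :=
  p.2 * (5 * (p.2 ^ 3 + a * p.2 ^ 2 - a ^ 4 * p.2 - a ^ 5 - (2 / 5) * a ^ 4) + 2 * p.1 ^ 2)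

noncomputable def Dmap (c11 c12 c21 c22 : ℝ) : ℝ × ℝ →L[ℝ] ℝ × ℝ :=
  (c11 • ContinuousLinearMap.fst ℝ ℝ ℝ + c12 • ContinuousLinearMap.snd ℝ ℝ ℝ).prod
  (c21 • ContinuousLinearMap.fst ℝ ℝ ℝ + c22 • ContinuousLinearMap.snd ℝ ℝ ℝ)

lemma det_Dmap (c11 c12 c21 c22 : ℝ) :
    LinearMap.det ((Dmap c11 c12 c21 c22 : ℝ × ℝ →L[ℝ] ℝ × ℝ) : ℝ × ℝ →ₗ[ℝ] ℝ × ℝ)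
      = c11 * c22 - c12 * c21 := by
  rw [← LinearMap.det_toMatrix (Module.Basis.finTwoProd ℝ), Matrix.det_fin_two]
  simp [LinearMap.toMatrix_apply, Module.Basis.finTwoProd, Dmap]

lemma hasFDerivAt_pair (a : ℝ) (p : ℝ × ℝ) :
    HasFDerivAt (fun q : ℝ × ℝ => ((gOne a q : ℝ), (gTwo a q : ℝ)))
      (Dmap (20*p.1^3 + 15*a*p.1^2 - 10*a^4*p.1 - 5*a^5 - 2*a^4 + 2*p.2^2) (4*p.1*p.2)
            (4*p.1*p.2) (20*p.2^3 + 15*a*p.2^2 - 10*a^4*p.2 - 5*a^5 - 2*a^4 + 2*p.1^2)) p := by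
  have hx : HasFDerivAt (fun q : ℝ × ℝ => q.1) (ContinuousLinearMap.fst ℝ ℝ ℝ) p :=
    hasFDerivAt_fst
  have hy : HasFDerivAt (fun q : ℝ × ℝ => q.2) (ContinuousLinearMap.snd ℝ ℝ ℝ) p :=
    hasFDerivAt_snd
  have h1 := hx.mul (((((((hx.mul hx).mul hx).add ((hx.mul hx).const_mul a)).sub
      (hx.const_mul (a^4))).sub_const (a^5)).sub_const ((2/5)*a^4)).const_mul 5 |>.add
      ((hy.mul hy).const_mul 2))
  have h2 := hy.mul (((((((hy.mul hy).mul hy).add ((hy.mul hy).const_mul a)).sub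
      (hy.const_mul (a^4))).sub_const (a^5)).sub_const ((2/5)*a^4)).const_mul 5 |>.add
      ((hx.mul hx).const_mul 2))
  refine HasFDerivAt.congr_of_eventuallyEq ((h1.prodMk h2).congr_fderiv ?_)
    (Filter.Eventually.of_forall fun q => ?_)
  · refine ContinuousLinearMap.ext fun v => ?_
    simp [Dmap, ContinuousLinearMap.prod_apply]
    constructor <;> ring
  · simp only [gOne, gTwo, Prod.mk.injEq, Pi.mul_apply, Pi.add_apply, Pi.sub_apply, Pi.pow_apply]
    constructor <;> ring

/-- the cubic `q` -/
noncomputable def qq (a t : ℝ) : ℝ := t^3 + a*t^2 - a^4*t - a^5 - (2/5)*a^4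

/-- no common root of `q` and `q'` for small `a` -/
lemma qprime_ne {a r : ℝ} (ha0 : 0 < a) (ha : a < 1/100) (hq : qq a r = 0) :
    3*r^2 + 2*a*r - a^4 ≠ 0 := by
  intro h'
  have h3 : r^2 - 2*a^3*r - (3*a^4 + (6/5)*a^3) = 0 := by
    have h3a : a * (r^2 - 2*a^3*r - (3*a^4 + (6/5)*a^3)) = 0 := by
      unfold qq at hq; linear_combination 3*hq - r*h'
    rcases mul_eq_zero.mp h3a with h | h
    · exact absurd h ha0.ne'
    · exact h
  have h4 : (2*a + 6*a^3)*r + (8*a^4 + (18/5)*a^3) = 0 := by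
    linear_combination h' - 3*h3
  have h5 : -((2*a+6*a^3)^2*(3*a^4+(6/5)*a^3)) + 2*a^3*(2*a+6*a^3)*(8*a^4+(18/5)*a^3)
      + (8*a^4+(18/5)*a^3)^2 = 0 := by
    linear_combination (2*a+6*a^3)^2 * h3 - ((2*a+6*a^3)*r - 2*a^3*(2*a+6*a^3)
      - (8*a^4+(18/5)*a^3)) * h4
  -- h5 says -(24/5)a^5 + (24/25)a^6 + (216/5)a^7 + 24a^8 - 12a^10 = 0, impossible
  have e6 : a^6 < a^5/100 := by nlinarith [pow_pos ha0 5]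
  have e7 : a^7 < a^5/10000 := by nlinarith [pow_pos ha0 5, pow_pos ha0 6, sq_nonneg a]
  have e8 : a^8 < a^5/100^3 := by nlinarith [pow_pos ha0 5, pow_pos ha0 6, pow_pos ha0 7]
  have e10 : 0 < a^10 := pow_pos ha0 10
  nlinarith [pow_pos ha0 5]

/-- location of roots forces the second diagonal entry to be nonzero -/
lemma c22_ne {a r : ℝ} (ha0 : 0 < a) (ha : a < 1/100) (hq : qq a r = 0)
    (h1 : -a < r) (h2 : r < a) : -5*a^5 - 2*a^4 + 2*r^2 ≠ 0 := by
  intro h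
  have hid : (r^2 - a^4)*(r + a) = (2/5)*a^4 := by unfold qq at hq; linear_combination hq
  -- then (5/2)a^5 * (r+a) = (2/5) a^4, i.e. 25 a (r+a) = 4, impossible
  have hr2 : r^2 - a^4 = (5/2)*a^5 := by linarith
  rw [hr2] at hid
  nlinarith [pow_pos ha0 4, pow_pos ha0 5, mul_pos ha0 ha0]

/-- positivity of the quartic cofactor -/
lemma S_pos {a x : ℝ} (ha0 : 0 < a) (ha : a < 1/100) (hx1 : -(1:ℝ)/10 < x) (hx2 : x < 1/10) :
    0 < 4 - 10*a - 25*a^2 + (125/2)*a^3 - (625/4)*a^6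
      + x*(-10 + (125/2)*a^2 - (625/2)*a^5)
      + x^2*(25 - (125/2)*a + (625/4)*a^2 - (625/4)*a^4)
      + x^3*(-(125/2) + (625/2)*a) + (625/4)*x^4 := by
  have ha1 : a ≤ 1 := by linarith
  have ha2 : 0 < a^2 := pow_pos ha0 2
  have ha5 : 0 < a^5 := pow_pos ha0 5
  have ha2b : a^2 ≤ 1/10000 := by nlinarith
  have ha3b : a^3 ≤ a^2 := by nlinarith [pow_pos ha0 2]
  have ha4b : a^4 ≤ a^2 := by nlinarith [pow_pos ha0 2, pow_pos ha0 3]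
  have ha5b : a^5 ≤ a^2 := by nlinarith [pow_pos ha0 2, pow_pos ha0 3, pow_pos ha0 4]
  have ha6b : a^6 ≤ a^2 := by
    nlinarith [pow_pos ha0 2, pow_pos ha0 3, pow_pos ha0 4, pow_pos ha0 5]
  have hx2b : x^2 ≤ 1/100 := by nlinarith
  have hx3lo : -(1:ℝ)/1000 ≤ x^3 := by
    nlinarith [mul_nonneg (by linarith : (0:ℝ) ≤ x + 1/10) (sq_nonneg x), hx2b]
  have hx3hi : x^3 ≤ 1/1000 := by
    nlinarith [mul_nonneg (by linarith : (0:ℝ) ≤ 1/10 - x) (sq_nonneg x), hx2b]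
  have t1 : x*(-10 + (125/2)*a^2 - (625/2)*a^5) ≥ -(11:ℝ)/10 := by
    nlinarith [mul_nonneg (by linarith : (0:ℝ) ≤ 1/10 - x)
      (by nlinarith : (0:ℝ) ≤ 10 - (125/2)*a^2 + (625/2)*a^5), ha2, ha5, ha2b, ha5b]
  have t2 : 0 ≤ x^2*(25 - (125/2)*a + (625/4)*a^2 - (625/4)*a^4) := by
    apply mul_nonneg (sq_nonneg x); nlinarith
  have t3 : x^3*(-(125/2) + (625/2)*a) ≥ -(7:ℝ)/100 := by
    nlinarith [mul_nonneg (by linarith : (0:ℝ) ≤ 1/1000 - x^3)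
      (by linarith : (0:ℝ) ≤ (125/2) - (625/2)*a), ha0]
  have t4 : 0 ≤ (625/4)*x^4 := by positivity
  nlinarith [t1, t2, t3, t4]

/-- the off-axis, off-diagonal zeroes satisfy `x² = a⁴` -/
lemma offaxis {a x y : ℝ} (ha0 : 0 < a) (ha : a < 1/100)
    (hx1 : -(1:ℝ)/10 < x) (hx2 : x < 1/10)
    (hB1 : 5*(x^3 + a*x^2 - a^4*x - a^5 - (2/5)*a^4) + 2*y^2 = 0)
    (hG : 5*(x^2 + x*y + y^2) + (5*a-2)*(x+y) - 5*a^4 = 0) : x^2 = a^4 := by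
  have hS := S_pos ha0 ha hx1 hx2
  have hRS : (x^2 - a^4) * (4 - 10*a - 25*a^2 + (125/2)*a^3 - (625/4)*a^6
      + x*(-10 + (125/2)*a^2 - (625/2)*a^5)
      + x^2*(25 - (125/2)*a + (625/4)*a^2 - (625/4)*a^4)
      + x^3*(-(125/2) + (625/2)*a) + (625/4)*x^4) = 0 := by
    linear_combination ((5*x+5*a-2)^2/2 + (5/2)*((5*x+5*a-2)*y
        + (-5*x^2-(5*a-2)*x+5*a^4+(25/2)*(x^3+a*x^2-a^4*x-a^5-(2/5)*a^4)))) * hB1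
      - ((5*x+5*a-2)*y
        + (-5*x^2-(5*a-2)*x+5*a^4+(25/2)*(x^3+a*x^2-a^4*x-a^5-(2/5)*a^4))) * hG
  rcases mul_eq_zero.mp hRS with h | h
  · linarith only [h]
  · exact absurd h (ne_of_gt hS)

/-- There are an open neighborhood `U` of the origin in `ℝ²` and `ε > 0` such that for all
`0 < a < ε` the common zero set of `g₁` and `g₂` in `U` is finite with exactly 11 elements,
and at each common zero the Jacobian determinant of `(g₁, g₂)` is nonzero
(`dg₁ ∧ dg₂ ≠ 0`). -/
theorem stmt_14 :
    ∃ U : Set (ℝ × ℝ), IsOpen U ∧ ((0 : ℝ), (0 : ℝ)) ∈ U ∧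
      ∃ ε : ℝ, 0 < ε ∧ ∀ a : ℝ, 0 < a → a < ε →
        {p : ℝ × ℝ | p ∈ U ∧ gOne a p = 0 ∧ gTwo a p = 0}.Finite ∧
        {p : ℝ × ℝ | p ∈ U ∧ gOne a p = 0 ∧ gTwo a p = 0}.ncard = 11 ∧
        ∀ p ∈ {p : ℝ × ℝ | p ∈ U ∧ gOne a p = 0 ∧ gTwo a p = 0},
          LinearMap.det
            ((fderiv ℝ (fun q : ℝ × ℝ => ((gOne a q : ℝ), (gTwo a q : ℝ))) p) :
              ℝ × ℝ →ₗ[ℝ] ℝ × ℝ) ≠ 0 := by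
  classical
  refine ⟨Set.Ioo (-(1:ℝ)/10) (1/10) ×ˢ Set.Ioo (-(1:ℝ)/10) (1/10),
    (isOpen_Ioo.prod isOpen_Ioo), by simp only [Set.mem_prod, Set.mem_Ioo]; norm_num,
    1/100, by norm_num, ?_⟩
  intro a ha0 ha
  have ha4 : 0 < a^4 := pow_pos ha0 4
  have ha5 : 0 < a^5 := pow_pos ha0 5
  have ha3 : 0 < a^3 := pow_pos ha0 3
  have ha2 : 0 < a^2 := pow_pos ha0 2
  have hasm : 0 < 1/100 - a := by linarith
  -- continuity of the cubic
  have hcont : Continuous fun t : ℝ => qq a t := by unfold qq; fun_prop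
  -- sign values
  have hva : qq a (-a) < 0 := by unfold qq; nlinarith
  have hvb : 0 < qq a (-(2/3)*a) := by
    unfold qq; nlinarith [mul_pos ha3 hasm, mul_pos ha4 hasm, mul_pos ha4 (by linarith : (0:ℝ) < 1 - a)]
  have hvc : qq a 0 < 0 := by unfold qq; nlinarith
  have hvd : 0 < qq a a := by
    unfold qq; nlinarith [mul_pos ha3 hasm, mul_pos ha4 hasm, mul_pos ha4 (by linarith : (0:ℝ) < 1 - a)]
  -- the three roots
  obtain ⟨r₁, hr₁, hq1⟩ : ∃ r ∈ Set.Ioo (-a) (-(2/3)*a), qq a r = 0 := by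
    have h := intermediate_value_Ioo (by linarith : (-a : ℝ) ≤ -(2/3)*a) hcont.continuousOn
    obtain ⟨r, hr, hq⟩ := h ⟨hva, hvb⟩
    exact ⟨r, hr, hq⟩
  obtain ⟨r₂, hr₂, hq2⟩ : ∃ r ∈ Set.Ioo (-(2/3)*a) 0, qq a r = 0 := by
    have h := intermediate_value_Ioo' (by linarith : (-(2/3)*a : ℝ) ≤ 0) hcont.continuousOn
    obtain ⟨r, hr, hq⟩ := h ⟨hvc, hvb⟩
    exact ⟨r, hr, hq⟩
  obtain ⟨r₃, hr₃, hq3⟩ : ∃ r ∈ Set.Ioo (0:ℝ) a, qq a r = 0 := by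
    have h := intermediate_value_Ioo (by linarith : (0:ℝ) ≤ a) hcont.continuousOn
    obtain ⟨r, hr, hq⟩ := h ⟨hvc, hvd⟩
    exact ⟨r, hr, hq⟩
  obtain ⟨hr₁a, hr₁b⟩ := hr₁
  obtain ⟨hr₂a, hr₂b⟩ := hr₂
  obtain ⟨hr₃a, hr₃b⟩ := hr₃
  -- basic ordering facts
  have h12 : r₁ < r₂ := by linarith
  have h23 : r₂ < r₃ := by linarith
  have h13 : r₁ < r₃ := by linarith
  have hr₁0 : r₁ ≠ 0 := by intro h; rw [h] at hr₁b; nlinarith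
  have hr₂0 : r₂ ≠ 0 := ne_of_lt hr₂b
  have hr₃0 : r₃ ≠ 0 := ne_of_gt hr₃a
  have hr₁lo : -(1:ℝ)/10 < r₁ := by linarith
  have hr₁hi : r₁ < 1/10 := by linarith
  have hr₂lo : -(1:ℝ)/10 < r₂ := by linarith
  have hr₂hi : r₂ < 1/10 := by linarith
  have hr₃lo : -(1:ℝ)/10 < r₃ := by linarith
  have hr₃hi : r₃ < 1/10 := by linarith
  have haa : a^2 < 1/10 := by nlinarith [mul_pos ha0 hasm]
  have ha2lo : -(1:ℝ)/10 < a^2 := by linarith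
  have ha2hi : a^2 < 1/10 := haa
  have hna2lo : -(1:ℝ)/10 < -a^2 := by linarith
  have hna2hi : -a^2 < 1/10 := by linarith
  -- every root of qq is one of the three
  have hq12 : r₂^2 + r₁*r₂ + r₁^2 + a*(r₂+r₁) - a^4 = 0 := by
    have e1 : (r₂ - r₁) * (r₂^2 + r₁*r₂ + r₁^2 + a*(r₂+r₁) - a^4) = 0 := by
      unfold qq at hq1 hq2; linear_combination hq2 - hq1
    rcases mul_eq_zero.mp e1 with h | h
    · exfalso; linarith [sub_eq_zero.mp h]
    · exact h
  have hq13 : r₃^2 + r₁*r₃ + r₁^2 + a*(r₃+r₁) - a^4 = 0 := by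
    have e1 : (r₃ - r₁) * (r₃^2 + r₁*r₃ + r₁^2 + a*(r₃+r₁) - a^4) = 0 := by
      unfold qq at hq1 hq3; linear_combination hq3 - hq1
    rcases mul_eq_zero.mp e1 with h | h
    · exfalso; linarith [sub_eq_zero.mp h]
    · exact h
  have hsum : r₁ + r₂ + r₃ + a = 0 := by
    have e3 : (r₂ - r₃) * (r₂ + r₃ + r₁ + a) = 0 := by linear_combination hq12 - hq13
    rcases mul_eq_zero.mp e3 with h | h
    · exfalso; linarith [sub_eq_zero.mp h]
    · linarith
  have hroot : ∀ t : ℝ, qq a t = 0 → t = r₁ ∨ t = r₂ ∨ t = r₃ := by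
    intro t ht
    by_cases h₁ : t = r₁
    · exact Or.inl h₁
    have e1 : (t - r₁) * (t^2 + r₁*t + r₁^2 + a*(t+r₁) - a^4) = 0 := by
      unfold qq at ht hq1; linear_combination ht - hq1
    have h2' : t^2 + r₁*t + r₁^2 + a*(t+r₁) - a^4 = 0 := by
      rcases mul_eq_zero.mp e1 with h | h
      · exact absurd (sub_eq_zero.mp h) h₁
      · exact h
    by_cases h₂ : t = r₂
    · exact Or.inr (Or.inl h₂)
    have e2 : (t - r₂) * (t + r₂ + r₁ + a) = 0 := by linear_combination h2' - hq12
    rcases mul_eq_zero.mp e2 with h | h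
    · exact absurd (sub_eq_zero.mp h) h₂
    · right; right; linarith
  -- the finite set of zeroes
  set Z : Finset (ℝ × ℝ) :=
    {((0:ℝ),(0:ℝ)), (r₁,0), (r₂,0), (r₃,0), (0,r₁), (0,r₂), (0,r₃),
     (a^2,a^2), (a^2,-a^2), (-a^2,a^2), (-a^2,-a^2)} with hZ
  have hset : {p : ℝ × ℝ | p ∈ Set.Ioo (-(1:ℝ)/10) (1/10) ×ˢ Set.Ioo (-(1:ℝ)/10) (1/10)
      ∧ gOne a p = 0 ∧ gTwo a p = 0} = (↑Z : Set (ℝ × ℝ)) := by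
    ext ⟨x, y⟩
    simp only [Set.mem_setOf_eq, Set.mem_prod, Set.mem_Ioo, hZ, Finset.coe_insert,
      Set.mem_insert_iff, Finset.coe_singleton, Set.mem_singleton_iff, Prod.mk.injEq,
      gOne, gTwo]
    constructor
    · rintro ⟨⟨⟨hx1, hx2⟩, ⟨hy1, hy2⟩⟩, h1, h2⟩
      by_cases hx0 : x = 0
      · subst hx0
        rcases mul_eq_zero.mp h2 with hy0 | hB2
        · exact Or.inl ⟨rfl, hy0⟩
        · have hqy : qq a y = 0 := by unfold qq; linear_combination hB2/5
          rcases hroot y hqy with rfl | rfl | rfl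
          · exact Or.inr (Or.inr (Or.inr (Or.inr (Or.inl ⟨rfl, rfl⟩))))
          · exact Or.inr (Or.inr (Or.inr (Or.inr (Or.inr (Or.inl ⟨rfl, rfl⟩)))))
          · exact Or.inr (Or.inr (Or.inr (Or.inr (Or.inr (Or.inr (Or.inl ⟨rfl, rfl⟩))))))
      have hB1 : 5*(x^3 + a*x^2 - a^4*x - a^5 - (2/5)*a^4) + 2*y^2 = 0 := by
        rcases mul_eq_zero.mp h1 with h | h
        · exact absurd h hx0
        · exact h
      by_cases hy0 : y = 0
      · subst hy0
        have hqx : qq a x = 0 := by unfold qq; linear_combination hB1/5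
        rcases hroot x hqx with rfl | rfl | rfl
        · exact Or.inr (Or.inl ⟨rfl, rfl⟩)
        · exact Or.inr (Or.inr (Or.inl ⟨rfl, rfl⟩))
        · exact Or.inr (Or.inr (Or.inr (Or.inl ⟨rfl, rfl⟩)))
      have hB2 : 5*(y^3 + a*y^2 - a^4*y - a^5 - (2/5)*a^4) + 2*x^2 = 0 := by
        rcases mul_eq_zero.mp h2 with h | h
        · exact absurd h hy0
        · exact h
      -- off-axis case : x ≠ 0, y ≠ 0
      have hx2eq : x^2 = a^4 := by
        by_cases hxy : x = y
        · subst hxy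
          have e : (x^2 - a^4) * (5*x + 5*a + 2) = 0 := by linear_combination hB1
          rcases mul_eq_zero.mp e with h | h
          · linarith only [h]
          · exfalso; linarith only [h, hx1, ha0]
        · have hG : 5*(x^2 + x*y + y^2) + (5*a-2)*(x+y) - 5*a^4 = 0 := by
            have e : (x - y) * (5*(x^2 + x*y + y^2) + (5*a-2)*(x+y) - 5*a^4) = 0 := by
              linear_combination hB1 - hB2
            rcases mul_eq_zero.mp e with h | h
            · exact absurd (sub_eq_zero.mp h) hxy
            · exact h
          exact offaxis ha0 ha hx1 hx2 hB1 hG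
      have hy2eq : y^2 = a^4 := by linear_combination (1/2)*hB1 - (5/2)*(x+a)*hx2eq
      have hx' : x = a^2 ∨ x = -a^2 := by
        have e : (x - a^2) * (x + a^2) = 0 := by linear_combination hx2eq
        rcases mul_eq_zero.mp e with h | h
        · exact Or.inl (by linarith only [h])
        · exact Or.inr (by linarith only [h])
      have hy' : y = a^2 ∨ y = -a^2 := by
        have e : (y - a^2) * (y + a^2) = 0 := by linear_combination hy2eq
        rcases mul_eq_zero.mp e with h | h
        · exact Or.inl (by linarith only [h])
        · exact Or.inr (by linarith only [h])
      rcases hx' with rfl | rfl <;> rcases hy' with h | h <;> subst h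
      · exact Or.inr (Or.inr (Or.inr (Or.inr (Or.inr (Or.inr (Or.inr (Or.inl ⟨rfl, rfl⟩)))))))
      · exact Or.inr (Or.inr (Or.inr (Or.inr (Or.inr (Or.inr (Or.inr (Or.inr (Or.inl ⟨rfl, rfl⟩))))))))
      · exact Or.inr (Or.inr (Or.inr (Or.inr (Or.inr (Or.inr (Or.inr (Or.inr (Or.inr (Or.inl ⟨rfl, rfl⟩)))))))))
      · exact Or.inr (Or.inr (Or.inr (Or.inr (Or.inr (Or.inr (Or.inr (Or.inr (Or.inr (Or.inr ⟨rfl, rfl⟩)))))))))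
    · intro h
      rcases h with ⟨rfl, rfl⟩ | ⟨rfl, rfl⟩ | ⟨rfl, rfl⟩ | ⟨rfl, rfl⟩ | ⟨rfl, rfl⟩ |
        ⟨rfl, rfl⟩ | ⟨rfl, rfl⟩ | ⟨rfl, rfl⟩ | ⟨rfl, rfl⟩ | ⟨rfl, rfl⟩ | ⟨rfl, rfl⟩
      · refine ⟨⟨⟨by norm_num, by norm_num⟩, ⟨by norm_num, by norm_num⟩⟩, by ring, by ring⟩
      · exact ⟨⟨⟨hr₁lo, hr₁hi⟩, ⟨by norm_num, by norm_num⟩⟩,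
          by unfold qq at hq1; linear_combination 5*x*hq1, by ring⟩
      · exact ⟨⟨⟨hr₂lo, hr₂hi⟩, ⟨by norm_num, by norm_num⟩⟩,
          by unfold qq at hq2; linear_combination 5*x*hq2, by ring⟩
      · exact ⟨⟨⟨hr₃lo, hr₃hi⟩, ⟨by norm_num, by norm_num⟩⟩,
          by unfold qq at hq3; linear_combination 5*x*hq3, by ring⟩
      · exact ⟨⟨⟨by norm_num, by norm_num⟩, ⟨hr₁lo, hr₁hi⟩⟩, by ring,
          by unfold qq at hq1; linear_combination 5*y*hq1⟩
      · exact ⟨⟨⟨by norm_num, by norm_num⟩, ⟨hr₂lo, hr₂hi⟩⟩, by ring,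
          by unfold qq at hq2; linear_combination 5*y*hq2⟩
      · exact ⟨⟨⟨by norm_num, by norm_num⟩, ⟨hr₃lo, hr₃hi⟩⟩, by ring,
          by unfold qq at hq3; linear_combination 5*y*hq3⟩
      · exact ⟨⟨⟨ha2lo, ha2hi⟩, ⟨ha2lo, ha2hi⟩⟩, by ring, by ring⟩
      · exact ⟨⟨⟨ha2lo, ha2hi⟩, ⟨hna2lo, hna2hi⟩⟩, by ring, by ring⟩
      · exact ⟨⟨⟨hna2lo, hna2hi⟩, ⟨ha2lo, ha2hi⟩⟩, by ring, by ring⟩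
      · exact ⟨⟨⟨hna2lo, hna2hi⟩, ⟨hna2lo, hna2hi⟩⟩, by ring, by ring⟩
  have hz1 : (0:ℝ) ≠ r₁ := Ne.symm hr₁0
  have hz2 : (0:ℝ) ≠ r₂ := Ne.symm hr₂0
  have hz3 : (0:ℝ) ≠ r₃ := Ne.symm hr₃0
  have hn12 : r₁ ≠ r₂ := ne_of_lt h12
  have hn13 : r₁ ≠ r₃ := ne_of_lt h13
  have hn23 : r₂ ≠ r₃ := ne_of_lt h23
  have hA0 : a^2 ≠ 0 := ne_of_gt ha2
  have hA0' : (0:ℝ) ≠ a^2 := ne_of_lt ha2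
  have hA0n : (0:ℝ) ≠ -a^2 := by intro h; exact hA0 (by linarith)
  have hAm : a^2 ≠ -a^2 := by intro h; nlinarith
  have hAm' : -a^2 ≠ a^2 := Ne.symm hAm
  refine ⟨by rw [hset]; exact Z.finite_toSet, ?_, ?_⟩
  · -- cardinality
    rw [hset, Set.ncard_coe_finset, hZ]
    rw [Finset.card_insert_of_notMem (by
        simp [Prod.ext_iff, hz1, hz2, hz3, hA0', hA0n]),
      Finset.card_insert_of_notMem (by
        simp [Prod.ext_iff, hr₁0, hn12, hn13, hA0', hA0n]),
      Finset.card_insert_of_notMem (by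
        simp [Prod.ext_iff, hr₂0, hn23, hA0', hA0n]),
      Finset.card_insert_of_notMem (by
        simp [Prod.ext_iff, hr₃0, hA0', hA0n]),
      Finset.card_insert_of_notMem (by
        simp [Prod.ext_iff, hn12, hn13, hA0', hA0n]),
      Finset.card_insert_of_notMem (by
        simp [Prod.ext_iff, hn23, hA0', hA0n]),
      Finset.card_insert_of_notMem (by
        simp [Prod.ext_iff, hA0', hA0n]),
      Finset.card_insert_of_notMem (by
        simp [Prod.ext_iff, hAm, hAm']),
      Finset.card_insert_of_notMem (by
        simp [Prod.ext_iff, hAm, hAm']),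
      Finset.card_insert_of_notMem (by
        simp [Prod.ext_iff, hAm, hAm']),
      Finset.card_singleton]
  · -- Jacobian nonvanishing
    intro p hp
    rw [hset] at hp
    rw [(hasFDerivAt_pair a p).fderiv, det_Dmap]
    simp only [hZ, Finset.coe_insert, Set.mem_insert_iff, Finset.coe_singleton,
      Set.mem_singleton_iff] at hp
    have hb2 : a^2 ≤ 1/10000 := by nlinarith
    have hb10 : a^10 ≤ a^8/10000 := by
      nlinarith [mul_nonneg (le_of_lt (pow_pos ha0 8)) (by linarith : (0:ℝ) ≤ 1/10000 - a^2)]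
    have hb11 : a^11 ≤ a^8/10000 := by
      nlinarith [mul_nonneg (le_of_lt (pow_pos ha0 10)) (by linarith : (0:ℝ) ≤ 1 - a),
        pow_pos ha0 10]
    have hb12 : a^12 ≤ a^8/10000 := by
      nlinarith [mul_nonneg (le_of_lt (pow_pos ha0 10)) (by nlinarith [pow_pos ha0 2] :
        (0:ℝ) ≤ 1 - a^2), pow_pos ha0 10]
    have hb8 : 0 < a^8 := pow_pos ha0 8
    have hb11p : 0 < a^11 := pow_pos ha0 11
    rcases hp with rfl | rfl | rfl | rfl | rfl | rfl | rfl | rfl | rfl | rfl | rfl <;>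
      simp only [Prod.fst, Prod.snd]
    · intro h; linarith only [h, pow_pos ha0 8, pow_pos ha0 9, pow_pos ha0 10]
    · intro h
      have h' : (5*r₁*(3*r₁^2 + 2*a*r₁ - a^4)) * (-5*a^5 - 2*a^4 + 2*r₁^2) = 0 := by
        unfold qq at hq1
        linear_combination h - (5*(-5*a^5 - 2*a^4 + 2*r₁^2))*hq1
      rcases mul_eq_zero.mp h' with h'' | h''
      · rcases mul_eq_zero.mp h'' with h3 | h3
        · exact hr₁0 (by linarith only [h3])
        · exact qprime_ne ha0 ha hq1 h3
      · exact c22_ne ha0 ha hq1 hr₁a (by linarith) h''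
    · intro h
      have h' : (5*r₂*(3*r₂^2 + 2*a*r₂ - a^4)) * (-5*a^5 - 2*a^4 + 2*r₂^2) = 0 := by
        unfold qq at hq2
        linear_combination h - (5*(-5*a^5 - 2*a^4 + 2*r₂^2))*hq2
      rcases mul_eq_zero.mp h' with h'' | h''
      · rcases mul_eq_zero.mp h'' with h3 | h3
        · exact hr₂0 (by linarith only [h3])
        · exact qprime_ne ha0 ha hq2 h3
      · exact c22_ne ha0 ha hq2 (by linarith) (by linarith) h''
    · intro h
      have h' : (5*r₃*(3*r₃^2 + 2*a*r₃ - a^4)) * (-5*a^5 - 2*a^4 + 2*r₃^2) = 0 := by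
        unfold qq at hq3
        linear_combination h - (5*(-5*a^5 - 2*a^4 + 2*r₃^2))*hq3
      rcases mul_eq_zero.mp h' with h'' | h''
      · rcases mul_eq_zero.mp h'' with h3 | h3
        · exact hr₃0 (by linarith only [h3])
        · exact qprime_ne ha0 ha hq3 h3
      · exact c22_ne ha0 ha hq3 (by linarith) (by linarith) h''
    · intro h
      have h' : (5*r₁*(3*r₁^2 + 2*a*r₁ - a^4)) * (-5*a^5 - 2*a^4 + 2*r₁^2) = 0 := by
        unfold qq at hq1
        linear_combination h - (5*(-5*a^5 - 2*a^4 + 2*r₁^2))*hq1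
      rcases mul_eq_zero.mp h' with h'' | h''
      · rcases mul_eq_zero.mp h'' with h3 | h3
        · exact hr₁0 (by linarith only [h3])
        · exact qprime_ne ha0 ha hq1 h3
      · exact c22_ne ha0 ha hq1 hr₁a (by linarith) h''
    · intro h
      have h' : (5*r₂*(3*r₂^2 + 2*a*r₂ - a^4)) * (-5*a^5 - 2*a^4 + 2*r₂^2) = 0 := by
        unfold qq at hq2
        linear_combination h - (5*(-5*a^5 - 2*a^4 + 2*r₂^2))*hq2
      rcases mul_eq_zero.mp h' with h'' | h''
      · rcases mul_eq_zero.mp h'' with h3 | h3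
        · exact hr₂0 (by linarith only [h3])
        · exact qprime_ne ha0 ha hq2 h3
      · exact c22_ne ha0 ha hq2 (by linarith) (by linarith) h''
    · intro h
      have h' : (5*r₃*(3*r₃^2 + 2*a*r₃ - a^4)) * (-5*a^5 - 2*a^4 + 2*r₃^2) = 0 := by
        unfold qq at hq3
        linear_combination h - (5*(-5*a^5 - 2*a^4 + 2*r₃^2))*hq3
      rcases mul_eq_zero.mp h' with h'' | h''
      · rcases mul_eq_zero.mp h'' with h3 | h3
        · exact hr₃0 (by linarith only [h3])
        · exact qprime_ne ha0 ha hq3 h3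
      · exact c22_ne ha0 ha hq3 (by linarith) (by linarith) h''
    · intro h; linarith only [h, hb10, hb11, hb12, hb8, hb11p, pow_pos ha0 10, pow_pos ha0 12]
    · intro h; linarith only [h, hb10, hb11, hb12, hb8, hb11p, pow_pos ha0 10, pow_pos ha0 12]
    · intro h; linarith only [h, hb10, hb11, hb12, hb8, hb11p, pow_pos ha0 10, pow_pos ha0 12]
    · intro h; linarith only [h, hb10, hb11, hb12, hb8, hb11p, pow_pos ha0 10, pow_pos ha0 12]
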